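/- arXiv:2510.12026 — 3 statements merged into one kernel-verified Lean document; each statement's English description precedes it below -/
import Mathlib

section
/- (Series expansion of sigmoid derivatives.) For every integer k ≥ 0 and every real z < 0, the k-th derivative of the sigmoid function σ(x) = 1/(1+e^{−x}) satisfies σ^{(k)}(z) = Σ_{j=1}^{∞} (−1)^{j−1} j^k e^{jz}, where the series converges absolutely. -/
open MeasureTheory ProbabilityTheory Real Filter Finset
open scoped ENNReal NNReal

noncomputable section

/-- The sigmoid function. -/
def sigmoid (x : ℝ) : ℝ := (1 + Real.exp (-x))⁻¹

/-- The probabilists' Hermite polynomial `He_k`, as a real function. -/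
def He (k : ℕ) (z : ℝ) : ℝ := Polynomial.aeval z (Polynomial.hermite k)

/-- The standard Gaussian measure `N(0, I_d)` on `ℝ^d`. -/
def stdGaussian (d : ℕ) : Measure (Fin d → ℝ) := Measure.pi fun _ => gaussianReal 0 1

/-- Hermite coefficient `H(h, i) = E_{z ~ N(0,1)}[h(z) He_i(z)]`. -/
def hCoef (h : ℝ → ℝ) (i : ℕ) : ℝ := ∫ z, h z * He i z ∂(gaussianReal 0 1)

/-- Euclidean norm of a finitely-indexed real vector. -/
def euclNorm {ι : Type*} [Fintype ι] (v : ι → ℝ) : ℝ := Real.sqrt (∑ i, v i ^ 2)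

/-- Euclidean inner product. -/
def dotp {d : ℕ} (x y : Fin d → ℝ) : ℝ := ∑ i, x i * y i

def IsEvenPoly (g : Polynomial ℝ) : Prop := ∀ z : ℝ, g.eval (-z) = g.eval z

def IsOddPoly (g : Polynomial ℝ) : Prop := ∀ z : ℝ, g.eval (-z) = -g.eval z

open Classical in
/-- The generative exponent of a polynomial link function: `2` if it is even, `1` otherwise. -/
def geExp (g : Polynomial ℝ) : ℕ := if IsEvenPoly g then 2 else 1

/-- Normalization of the link function: mean zero and unit second moment under `N(0,1)`. -/
def gNormalized (g : Polynomial ℝ) : Prop :=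
  (∫ z, g.eval z ∂(gaussianReal 0 1)) = 0 ∧ (∫ z, (g.eval z) ^ 2 ∂(gaussianReal 0 1)) = 1

/-- `f = Θ(gfn)` as `d → ∞`. -/
def IsTheta (f gfn : ℕ → ℝ) : Prop :=
  ∃ c C : ℝ, 0 < c ∧ 0 < C ∧ ∀ᶠ d in atTop, c * gfn d ≤ f d ∧ f d ≤ C * gfn d

/-- The label-noise distribution `Unif({-τ, τ})`. -/
def signNoise (τ : ℝ) : Measure ℝ :=
  ((2 : ℝ≥0∞)⁻¹ • Measure.dirac (-τ)) + ((2 : ℝ≥0∞)⁻¹ • Measure.dirac τ)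

/-- The uniform distribution on `[-1, 1]`. -/
def unifIcc : Measure ℝ := (2 : ℝ≥0∞)⁻¹ • volume.restrict (Set.Icc (-1 : ℝ) 1)

/-- `Unif({±1}^m)`. -/
def signVec (m : ℕ) : Measure (Fin m → ℝ) := Measure.pi fun _ => signNoise 1

/-- `Unif([-1,1]^m)`. -/
def unifCube (m : ℕ) : Measure (Fin m → ℝ) := Measure.pi fun _ => unifIcc

/-- The Gaussian single-index sample distribution `D_β` of `(x, y)`,
with `x ~ N(0, I_d)` and `y = g(⟨β, x⟩) + ζ`, `ζ ~ Unif({-τ, τ})`. -/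
def singleIndex (d : ℕ) (g : Polynomial ℝ) (β : Fin d → ℝ) (τ : ℝ) :
    Measure ((Fin d → ℝ) × ℝ) :=
  ((stdGaussian d).prod (signNoise τ)).map fun p => (p.1, g.eval (dotp β p.1) + p.2)

/-- Index type for the quadratic input embedding: a constant coordinate, the linear
coordinates, the (normalized) square coordinates, and the pairwise products. -/
def EmbIx (d : ℕ) : Type := Unit ⊕ Fin d ⊕ Fin d ⊕ {p : Fin d × Fin d // p.1 < p.2}

instance (d : ℕ) : Fintype (EmbIx d) := by unfold EmbIx; infer_instance

/-- The quadratic input embedding `φ : ℝ^d → ℝ^{d̃}`. -/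
def phi {d : ℕ} (θ : Fin d → ℝ) : EmbIx d → ℝ
  | Sum.inl _ => 1
  | Sum.inr (Sum.inl i) => θ i
  | Sum.inr (Sum.inr (Sum.inl i)) => (θ i ^ 2 - 1) / Real.sqrt 2
  | Sum.inr (Sum.inr (Sum.inr p)) => θ p.1.1 * θ p.1.2

/-- The vector `ψ(θ, c₀, c₁, c₂) ∈ ℝ^{d̃}`. -/
def psi {d : ℕ} (θ : Fin d → ℝ) (c0 c1 c2 : ℝ) : EmbIx d → ℝ
  | Sum.inl _ => c0
  | Sum.inr (Sum.inl i) => c1 * θ i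
  | Sum.inr (Sum.inr (Sum.inl i)) => c2 * θ i ^ 2 / Real.sqrt 2
  | Sum.inr (Sum.inr (Sum.inr p)) => c2 * θ p.1.1 * θ p.1.2

/-- Initialization `γ(0) = (γ², 1, …, 1, γ, …, γ)`. -/
def gammaInit (d : ℕ) (γsc : ℝ) : EmbIx d → ℝ
  | Sum.inl _ => γsc ^ 2
  | Sum.inr (Sum.inl _) => 1
  | Sum.inr (Sum.inr _) => γsc

/-- The gate `G_{j, N+1}(Z)` of a prompt whose context labels are `y` (and whose query
carries label `0`), for gating vector `w = (0, ρ⁻¹)` and bias `b`. -/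
def gate (ρ b : ℝ) {N : ℕ} (y : Fin N → ℝ) (j : Fin N) : ℝ :=
  _root_.sigmoid (y j / ρ + b) * (1 - _root_.sigmoid b) *
    ∏ k ∈ Finset.univ.filter (fun k => j < k), (1 - _root_.sigmoid (y k / ρ + b))

/-- The last coordinate of the final output of the simplified one-layer Mamba:
`Mamba(Z; γ)[d̃+1, N+1] = Σ_j G_{j,N+1}(Z) y_j φ(x_j)ᵀ (γ ⊙ φ(x))`. -/
def mambaOut {d N : ℕ} (ρ b : ℝ) (γ : EmbIx d → ℝ)
    (ctx : Fin N → (Fin d → ℝ) × ℝ) (x : Fin d → ℝ) : ℝ :=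
  ∑ j, gate ρ b (fun k => (ctx k).2) j * (ctx j).2 *
    ∑ ix, phi (ctx j).1 ix * (γ ix * phi x ix)

/-- Two-layer ReLU MLP. -/
def mlp (m : ℕ) (u v a : Fin m → ℝ) (z : ℝ) : ℝ := ∑ k, u k * max (v k * z + a k) 0

/-- The full prediction model `f(Z; γ, u, v, a)`. -/
def predict (d N m : ℕ) (ρ b : ℝ) (γ : EmbIx d → ℝ) (u v a : Fin m → ℝ)
    (ctx : Fin N → (Fin d → ℝ) × ℝ) (x : Fin d → ℝ) : ℝ :=
  mlp m u v a ((N : ℝ)⁻¹ * mambaOut ρ b γ ctx x)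

/-- Truncation `ḡ_*` of the rescaled link function. -/
def gbar (g : Polynomial ℝ) (ρ : ℝ) (d : ℕ) (z : ℝ) : ℝ :=
  if |g.eval z / ρ| ≤ 1 / Real.log d then g.eval z / ρ else 0

/-- The function `A(z)` appearing in the analysis of the gated label average. -/
def Afun (g : Polynomial ℝ) (ρ b τ : ℝ) (d : ℕ) (z : ℝ) : ℝ :=
  (1 / 2) * ((ρ * gbar g ρ d z + τ) * _root_.sigmoid (gbar g ρ d z + τ / ρ + b)
    + (ρ * gbar g ρ d z - τ) * _root_.sigmoid (gbar g ρ d z - τ / ρ + b))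

/-- Hermite coefficients `a_p = H(A, p)`. -/
def aCoef (g : Polynomial ℝ) (τ ρ b : ℝ) (d : ℕ) (p : ℕ) : ℝ := hCoef (Afun g ρ b τ d) p

/-- `B(z) = g_*(z) 𝟙[a₀γ² + a₁ z + a₂ γ He₂(z) > 0]`. -/
def Bfun (g : Polynomial ℝ) (a0 a1 a2 γsc : ℝ) (z : ℝ) : ℝ :=
  g.eval z * (if 0 < a0 * γsc ^ 2 + a1 * z + a2 * γsc * He 2 z then 1 else 0)

/-- Set defining `e_p(g)`. -/
def eSet (g : Polynomial ℝ) (p : ℕ) : Set ℕ :=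
  {i : ℕ | 1 ≤ i ∧ hCoef (fun z => g.eval z ^ i) p ≠ 0}

/-- `e_p(g) = min {i ≥ 1 : H(g^i, p) ≠ 0}` (junk value if the set is empty). -/
def eExp (g : Polynomial ℝ) (p : ℕ) : ℕ := sInf (eSet g p)

/-- The uniform distribution on the unit sphere of the coordinate subspace supported on `I`,
realized as the pushforward of a standard Gaussian by normalization. -/
def unifSphere (d : ℕ) (I : Finset (Fin d)) : Measure (Fin d → ℝ) :=
  (stdGaussian d).map fun x i => (if i ∈ I then x i else 0) / Real.sqrt (∑ j ∈ I, x j ^ 2)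

/-- A task sample: feature vector, `N` context examples, and a query pair. -/
abbrev TaskSample (d N : ℕ) :=
  (Fin d → ℝ) × ((Fin N → (Fin d → ℝ) × ℝ) × ((Fin d → ℝ) × ℝ))

/-- Distribution of the (contexts, query) part of a prompt drawn from `D_β`. -/
def promptDist (d N : ℕ) (g : Polynomial ℝ) (β : Fin d → ℝ) (τ : ℝ) :
    Measure ((Fin N → (Fin d → ℝ) × ℝ) × ((Fin d → ℝ) × ℝ)) :=
  (Measure.pi fun _ : Fin N => singleIndex d g β τ).prod (singleIndex d g β τ)

/-- The ICL task distribution `D(N)`: draw `β ~ Unif(S_r)`, then a prompt from `D_β`. -/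
def taskDist (d N : ℕ) (g : Polynomial ℝ) (I : Finset (Fin d)) (τ : ℝ) :
    Measure (TaskSample d N) :=
  (unifSphere d I).bind fun β => (promptDist d N g β τ).map fun p => (β, p)

/-- Pre-activation `N⁻¹ Mamba(Z; γ(0))[d̃+1, N+1]` at initialization. -/
def preactInit (d N : ℕ) (ρ b γsc : ℝ) (s : TaskSample d N) : ℝ :=
  (N : ℝ)⁻¹ * mambaOut ρ b (gammaInit d γsc) s.2.1 s.2.2.1

/-- The (a.e.) gradient in `γ` of the model output at initialization. -/
def gradFInit (d N : ℕ) (ρ b γsc : ℝ) (s : TaskSample d N) : EmbIx d → ℝ := fun ix =>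
  (if 0 < preactInit d N ρ b γsc s then 1 else 0) *
    ((N : ℝ)⁻¹ * ∑ j, gate ρ b (fun k => (s.2.1 k).2) j * (s.2.1 j).2 *
      (phi (s.2.1 j).1 ix * phi s.2.2.1 ix))

/-- Stage-I one-step gradient descent update of the Mamba parameter `γ`
on the `ℓ₂`-regularized empirical squared loss over `T` tasks. -/
def stageIUpdate (d N T : ℕ) (ρ b γsc η lam : ℝ) (S : Fin T → TaskSample d N) :
    EmbIx d → ℝ := fun ix =>
  gammaInit d γsc ix -
    η * (((T : ℝ)⁻¹ * ∑ t, 2 * (max (preactInit d N ρ b γsc (S t)) 0 - (S t).2.2.2) *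
        gradFInit d N ρ b γsc (S t) ix) + lam * gammaInit d γsc ix)

/-- The Stage-II ridge objective `L₂(γ, u, v, a) + (λ₂/2)‖u‖²`. -/
def ridgeObj (d N m T : ℕ) (ρ b lam2 : ℝ) (γ : EmbIx d → ℝ) (v a : Fin m → ℝ)
    (S : Fin T → TaskSample d N) (u : Fin m → ℝ) : ℝ :=
  (T : ℝ)⁻¹ * ∑ t, (predict d N m ρ b γ u v a (S t).2.1 (S t).2.2.1 - (S t).2.2.2) ^ 2 +
    lam2 / 2 * ∑ k, u k ^ 2

/-- The ICL test error `R_N(γ, u, v, a)`. -/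
def risk (d N m : ℕ) (g : Polynomial ℝ) (I : Finset (Fin d)) (τ ρ b : ℝ)
    (γ : EmbIx d → ℝ) (u v a : Fin m → ℝ) : ℝ :=
  ∫ s, |predict d N m ρ b γ u v a s.2.1 s.2.2.1 - s.2.2.2| ∂(taskDist d N g I τ)


lemma aux_summable (k : ℕ) {z : ℝ} (hz : z < 0) :
    Summable (fun j : ℕ => ((j : ℝ) + 1) ^ k * Real.exp (((j : ℝ) + 1) * z)) := by
  have hr : ‖Real.exp z‖ < 1 := by
    rw [Real.norm_eq_abs, abs_of_pos (Real.exp_pos z)]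
    exact Real.exp_lt_one_iff.mpr hz
  have h := summable_pow_mul_geometric_of_norm_lt_one k hr
  have h2 := (summable_nat_add_iff (f := fun n : ℕ => (n : ℝ) ^ k * Real.exp z ^ n) 1).mpr h
  refine h2.congr fun j => ?_
  rw [← Real.exp_nat_mul]
  push_cast
  ring_nf

lemma aux_summable_signed (k : ℕ) {z : ℝ} (hz : z < 0) :
    Summable (fun j : ℕ => (-1 : ℝ) ^ j * ((j : ℝ) + 1) ^ k * Real.exp (((j : ℝ) + 1) * z)) := by
  refine Summable.of_norm ((aux_summable k hz).congr fun j => ?_)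
  have h2 : |(j:ℝ) + 1| = (j:ℝ) + 1 := abs_of_pos (by positivity)
  simp [Real.norm_eq_abs, abs_mul, abs_pow, h2, abs_of_pos (Real.exp_pos _)]

lemma sigmoid_series (z : ℝ) (hz : z < 0) :
    HasSum (fun j : ℕ => (-1 : ℝ) ^ j * ((j : ℝ) + 1) ^ 0 * Real.exp (((j : ℝ) + 1) * z))
      (_root_.sigmoid z) := by
  have hr : ‖-Real.exp z‖ < 1 := by
    rw [norm_neg, Real.norm_eq_abs, abs_of_pos (Real.exp_pos z)]
    exact Real.exp_lt_one_iff.mpr hz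
  have hgeo := (hasSum_geometric_of_norm_lt_one hr).mul_left (Real.exp z)
  have hne : (1 : ℝ) + Real.exp z ≠ 0 := by positivity
  have hsig : _root_.sigmoid z = Real.exp z * (1 - -Real.exp z)⁻¹ := by
    unfold _root_.sigmoid
    rw [Real.exp_neg, sub_neg_eq_add]
    field_simp
    ring
  rw [hsig]
  refine hgeo.congr_fun fun j => ?_
  have h3 : ((j:ℝ) + 1) * z = (j:ℝ) * z + z := by ring
  rw [neg_pow, pow_zero, h3, Real.exp_add, Real.exp_nat_mul]
  ring

set_option maxHeartbeats 1000000 in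
lemma main_eq (k : ℕ) : ∀ z < 0, iteratedDeriv k _root_.sigmoid z =
    ∑' j : ℕ, (-1 : ℝ) ^ j * ((j : ℝ) + 1) ^ k * Real.exp (((j : ℝ) + 1) * z) := by
  induction k with
  | zero =>
    intro z hz
    exact ((sigmoid_series z hz).tsum_eq).symm
  | succ k ih =>
    intro z hz
    rw [iteratedDeriv_succ]
    have hev : iteratedDeriv k _root_.sigmoid =ᶠ[nhds z]
        fun x => ∑' j : ℕ, (-1 : ℝ) ^ j * ((j : ℝ) + 1) ^ k * Real.exp (((j : ℝ) + 1) * x) :=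
      Filter.eventually_of_mem (Iio_mem_nhds hz) (fun x hx => ih x hx)
    rw [hev.deriv_eq]
    have hz2 : z / 2 < 0 := by linarith
    have hmem : z ∈ Set.Iio (z / 2) := by
      simp only [Set.mem_Iio]; linarith
    have hd : HasDerivAt
        (fun x => ∑' j : ℕ, (-1 : ℝ) ^ j * ((j : ℝ) + 1) ^ k * Real.exp (((j : ℝ) + 1) * x))
        (∑' j : ℕ, (-1 : ℝ) ^ j * ((j : ℝ) + 1) ^ (k + 1) * Real.exp (((j : ℝ) + 1) * z)) z := by
      refine hasDerivAt_tsum_of_isPreconnected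
        (u := fun j : ℕ => ((j : ℝ) + 1) ^ (k + 1) * Real.exp (((j : ℝ) + 1) * (z / 2)))
        (g' := fun j : ℕ => fun x : ℝ =>
          (-1 : ℝ) ^ j * ((j : ℝ) + 1) ^ (k + 1) * Real.exp (((j : ℝ) + 1) * x))
        (aux_summable (k + 1) hz2) isOpen_Iio isPreconnected_Iio ?_ ?_ hmem
        (aux_summable_signed k hz) hmem
      · intro n y hy
        have h1 : HasDerivAt (fun x : ℝ => Real.exp (((n : ℝ) + 1) * x))
            (Real.exp (((n : ℝ) + 1) * y) * (((n : ℝ) + 1) * 1)) y :=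
          (Real.hasDerivAt_exp (((n : ℝ) + 1) * y)).comp y ((hasDerivAt_id y).const_mul ((n : ℝ) + 1))
        have h2 := h1.const_mul ((-1 : ℝ) ^ n * ((n : ℝ) + 1) ^ k)
        exact h2.congr_deriv (by ring)
      · intro n y hy
        have hy' : y < z / 2 := hy
        have h1 : Real.exp (((n : ℝ) + 1) * y) ≤ Real.exp (((n : ℝ) + 1) * (z / 2)) := by
          apply Real.exp_le_exp.mpr
          have hn : (0:ℝ) ≤ (n : ℝ) + 1 := by positivity
          nlinarith
        have h2 : (0:ℝ) ≤ ((n : ℝ) + 1) ^ (k + 1) := by positivity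
        have h3 : |(n:ℝ) + 1| = (n:ℝ) + 1 := abs_of_pos (by positivity)
        have h4 : ‖(-1 : ℝ) ^ n * ((n : ℝ) + 1) ^ (k + 1) * Real.exp (((n : ℝ) + 1) * y)‖
            = ((n : ℝ) + 1) ^ (k + 1) * Real.exp (((n : ℝ) + 1) * y) := by
          simp [Real.norm_eq_abs, abs_mul, abs_pow, h3, abs_of_pos (Real.exp_pos _)]
        rw [h4]
        exact mul_le_mul_of_nonneg_left h1 h2
    exact hd.deriv

/-- **Series expansion of sigmoid derivatives**: for every `k ≥ 0` and `z < 0`,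
`σ^{(k)}(z) = Σ_{j=1}^∞ (-1)^{j-1} j^k e^{jz}`, the series converging absolutely. -/
theorem sigmoid_iteratedDeriv_series (k : ℕ) (z : ℝ) (hz : z < 0) :
    Summable (fun j : ℕ => |(-1 : ℝ) ^ j * ((j : ℝ) + 1) ^ k * Real.exp (((j : ℝ) + 1) * z)|) ∧
    HasSum (fun j : ℕ => (-1 : ℝ) ^ j * ((j : ℝ) + 1) ^ k * Real.exp (((j : ℝ) + 1) * z))
      (iteratedDeriv k _root_.sigmoid z) := by
  constructor
  · exact (aux_summable_signed k hz).abs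
  · rw [main_eq k z hz]
    exact (aux_summable_signed k hz).hasSum

end
end

section
/- (Lemma A.6, sigmoid derivative bounds in the far-left tail.) For every integer k ≥ 0 and every real z < −k − 2, the k-th derivative of the sigmoid function satisfies e^z/2 ≤ σ^{(k)}(z) ≤ 2 e^z. -/
set_option maxHeartbeats 800000


open MeasureTheory ProbabilityTheory Real Filter Finset
open scoped ENNReal NNReal

noncomputable section

private lemma summable_aux (k : ℕ) {x : ℝ} (hx : x < 0) :
    Summable fun n : ℕ => ((n : ℝ) + 1) ^ k * Real.exp (((n : ℝ) + 1) * x) := by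
  have hr : ‖Real.exp x‖ < 1 := by
    rw [Real.norm_eq_abs, abs_of_pos (Real.exp_pos x)]
    exact Real.exp_lt_one_iff.mpr hx
  have h := (summable_pow_mul_geometric_of_norm_lt_one k hr).comp_injective
    (add_left_injective 1)
  refine h.congr fun n => ?_
  simp only [Function.comp_apply]
  push_cast
  rw [show ((n : ℝ) + 1) * x = ((n + 1 : ℕ) : ℝ) * x by push_cast; ring,
    Real.exp_nat_mul]

private lemma sigmoid_formula (k : ℕ) : ∀ x : ℝ, x < 0 →
    iteratedDeriv k _root_.sigmoid x
      = ∑' n : ℕ, (-1 : ℝ) ^ n * ((n : ℝ) + 1) ^ k * Real.exp (((n : ℝ) + 1) * x) := by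
  induction k with
  | zero =>
    intro x hx
    rw [iteratedDeriv_zero]
    have hr : ‖-Real.exp x‖ < 1 := by
      rw [norm_neg, Real.norm_eq_abs, abs_of_pos (Real.exp_pos x)]
      exact Real.exp_lt_one_iff.mpr hx
    have hg := tsum_geometric_of_norm_lt_one hr
    have key : ∑' n : ℕ, (-1 : ℝ) ^ n * ((n : ℝ) + 1) ^ 0 * Real.exp (((n : ℝ) + 1) * x)
        = Real.exp x * ∑' n : ℕ, (-Real.exp x) ^ n := by
      rw [← tsum_mul_left]
      refine tsum_congr fun n => ?_
      rw [show ((n : ℝ) + 1) * x = ((n + 1 : ℕ) : ℝ) * x by push_cast; ring,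
        Real.exp_nat_mul, neg_pow]
      ring
    rw [key, hg, sub_neg_eq_add]
    unfold _root_.sigmoid
    have h1 : (0:ℝ) < Real.exp x := Real.exp_pos x
    have h2 : (1:ℝ) + Real.exp x ≠ 0 := by positivity
    rw [Real.exp_neg]
    field_simp
    ring
  | succ k ih =>
    intro x hx
    have hx2 : x / 2 < 0 := by linarith
    have hxmem : x ∈ Set.Iio (x / 2) := by simp only [Set.mem_Iio]; linarith
    have hderiv : HasDerivAt
        (fun y => ∑' n : ℕ, (-1 : ℝ) ^ n * ((n : ℝ) + 1) ^ k * Real.exp (((n : ℝ) + 1) * y))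
        (∑' n : ℕ, (-1 : ℝ) ^ n * ((n : ℝ) + 1) ^ (k + 1) * Real.exp (((n : ℝ) + 1) * x)) x := by
      refine hasDerivAt_tsum_of_isPreconnected
        (u := fun n : ℕ => ((n : ℝ) + 1) ^ (k + 1) * Real.exp (((n : ℝ) + 1) * (x / 2)))
        (g := fun (n : ℕ) y => (-1 : ℝ) ^ n * ((n : ℝ) + 1) ^ k * Real.exp (((n : ℝ) + 1) * y))
        (g' := fun (n : ℕ) y => (-1 : ℝ) ^ n * ((n : ℝ) + 1) ^ (k + 1) * Real.exp (((n : ℝ) + 1) * y))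
        (summable_aux (k + 1) hx2)
        isOpen_Iio isPreconnected_Iio (fun n y _ => ?_) (fun n y hy => ?_) hxmem ?_ hxmem
      · have h := (((hasDerivAt_id y).const_mul ((n : ℝ) + 1)).exp).const_mul
          ((-1 : ℝ) ^ n * ((n : ℝ) + 1) ^ k)
        simp only [id] at h
        convert h using 1
        case e'_9 => ring
        all_goals rfl
      · rw [Real.norm_eq_abs, abs_mul, abs_mul, abs_pow, abs_neg, abs_one, one_pow,
          one_mul, abs_of_nonneg (by positivity : (0:ℝ) ≤ ((n : ℝ) + 1) ^ (k+1)),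
          abs_of_pos (Real.exp_pos _)]
        have : ((n : ℝ) + 1) * y ≤ ((n : ℝ) + 1) * (x / 2) := by
          apply mul_le_mul_of_nonneg_left (le_of_lt hy) (by positivity)
        exact mul_le_mul_of_nonneg_left (Real.exp_le_exp.mpr this) (by positivity)
      · apply Summable.of_norm
        refine (summable_aux k hx).congr fun n => ?_
        rw [Real.norm_eq_abs, abs_mul, abs_mul, abs_pow, abs_neg, abs_one, one_pow,
          one_mul, abs_of_nonneg (by positivity : (0:ℝ) ≤ ((n : ℝ) + 1) ^ k),
          abs_of_pos (Real.exp_pos _)]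
    rw [iteratedDeriv_succ]
    have heq : deriv (iteratedDeriv k _root_.sigmoid) x
        = deriv (fun y => ∑' n : ℕ, (-1 : ℝ) ^ n * ((n : ℝ) + 1) ^ k
            * Real.exp (((n : ℝ) + 1) * y)) x := by
      apply Filter.EventuallyEq.deriv_eq
      exact Filter.eventuallyEq_of_mem (Iio_mem_nhds hx) fun y hy => ih y hy
    rw [heq, hderiv.deriv]

/-- **Lemma A.6** (sigmoid derivative bounds in the far-left tail): for every `k ≥ 0`
and `z < -k - 2`, `e^z / 2 ≤ σ^{(k)}(z) ≤ 2 e^z`. -/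
theorem sigmoid_iteratedDeriv_bounds (k : ℕ) (z : ℝ) (hz : z < -(k : ℝ) - 2) :
    Real.exp z / 2 ≤ iteratedDeriv k _root_.sigmoid z ∧ iteratedDeriv k _root_.sigmoid z ≤ 2 * Real.exp z := by
  have hk0 : (0:ℝ) ≤ (k:ℝ) := Nat.cast_nonneg k
  have hz0 : z < 0 := by linarith
  set f : ℕ → ℝ := fun n => (-1 : ℝ) ^ n * ((n : ℝ) + 1) ^ k * Real.exp (((n : ℝ) + 1) * z)
    with hf
  have hnormeq : ∀ n : ℕ, ‖f n‖ = ((n : ℝ) + 1) ^ k * Real.exp (((n : ℝ) + 1) * z) := by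
    intro n
    rw [hf, Real.norm_eq_abs, abs_mul, abs_mul, abs_pow, abs_neg, abs_one, one_pow,
      one_mul, abs_of_nonneg (by positivity : (0:ℝ) ≤ ((n : ℝ) + 1) ^ k),
      abs_of_pos (Real.exp_pos _)]
  have hnormall : Summable fun n => ‖f n‖ :=
    (summable_aux k hz0).congr fun n => (hnormeq n).symm
  have hsum : Summable f := hnormall.of_norm
  have hnorm : Summable fun n => ‖f (n + 1)‖ := (summable_nat_add_iff 1).mpr hnormall
  have he2 : Real.exp (-2 : ℝ) < 1 := Real.exp_lt_one_iff.mpr (by norm_num)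
  have he2' : (0:ℝ) < Real.exp (-2 : ℝ) := Real.exp_pos _
  have hgeo : Summable fun n : ℕ => Real.exp z * Real.exp (-2 : ℝ) ^ (n + 1) :=
    Summable.mul_left _ <| (summable_nat_add_iff 1).mpr
      (summable_geometric_of_lt_one (le_of_lt he2') he2)
  have hterm : ∀ n : ℕ, ‖f (n + 1)‖ ≤ Real.exp z * Real.exp (-2 : ℝ) ^ (n + 1) := by
    intro n
    rw [hnormeq]
    set m : ℝ := (n : ℝ) + 1 with hm
    have hm1 : (1:ℝ) ≤ m := by rw [hm]; exact le_add_of_nonneg_left (Nat.cast_nonneg n)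
    have hm0 : (0:ℝ) < m := by linarith
    have hlog : Real.log (m + 1) ≤ m := by
      have := Real.log_le_sub_one_of_pos (by linarith : (0:ℝ) < m + 1)
      linarith
    have hpow : (m + 1) ^ k ≤ Real.exp ((k : ℝ) * m) := by
      have h1 : Real.exp ((k : ℝ) * Real.log (m + 1)) = (m + 1) ^ k := by
        rw [Real.exp_nat_mul, Real.exp_log (by linarith : (0:ℝ) < m + 1)]
      rw [← h1]
      exact Real.exp_le_exp.mpr (mul_le_mul_of_nonneg_left hlog hk0)
    have hcast : ((n + 1 : ℕ) : ℝ) + 1 = m + 1 := by push_cast; rw [hm]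
    rw [hcast]
    have hrhs : Real.exp z * Real.exp (-2 : ℝ) ^ (n + 1) = Real.exp (z - 2 * m) := by
      rw [← Real.exp_nat_mul, ← Real.exp_add]
      congr 1
      rw [hm]; push_cast; ring
    rw [hrhs]
    calc (m + 1) ^ k * Real.exp ((m + 1) * z)
        ≤ Real.exp ((k : ℝ) * m) * Real.exp ((m + 1) * z) := by
          exact mul_le_mul_of_nonneg_right hpow (le_of_lt (Real.exp_pos _))
      _ = Real.exp ((k : ℝ) * m + (m + 1) * z) := by rw [← Real.exp_add]
      _ ≤ Real.exp (z - 2 * m) := by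
          apply Real.exp_le_exp.mpr
          nlinarith [mul_le_mul_of_nonneg_left (show (k:ℝ) + z ≤ -2 by linarith)
            (le_of_lt hm0)]
  have htailsum : ∑' n : ℕ, Real.exp z * Real.exp (-2 : ℝ) ^ (n + 1)
      ≤ Real.exp z / 2 := by
    have hv : ∑' n : ℕ, Real.exp (-2 : ℝ) ^ (n + 1)
        = Real.exp (-2 : ℝ) * (1 - Real.exp (-2 : ℝ))⁻¹ := by
      rw [← tsum_geometric_of_lt_one (le_of_lt he2') he2, ← tsum_mul_left]
      exact tsum_congr fun n => by ring
    rw [tsum_mul_left, hv]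
    have h13 : Real.exp (-2 : ℝ) ≤ 1 / 3 := by
      have h3 : (3:ℝ) ≤ Real.exp 2 := by
        have := Real.add_one_lt_exp (by norm_num : (2:ℝ) ≠ 0)
        linarith
      rw [Real.exp_neg]
      calc (Real.exp 2)⁻¹ ≤ (3:ℝ)⁻¹ := inv_anti₀ (by norm_num) h3
        _ = 1 / 3 := by norm_num
    have h1r : (0:ℝ) < 1 - Real.exp (-2 : ℝ) := by linarith
    have : Real.exp (-2 : ℝ) * (1 - Real.exp (-2 : ℝ))⁻¹ ≤ 1 / 2 := by
      rw [← div_eq_mul_inv, div_le_iff₀ h1r]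
      linarith
    calc Real.exp z * (Real.exp (-2:ℝ) * (1 - Real.exp (-2:ℝ))⁻¹)
        ≤ Real.exp z * (1/2) := by
          exact mul_le_mul_of_nonneg_left this (le_of_lt (Real.exp_pos z))
      _ = Real.exp z / 2 := by ring
  have htail : |∑' n : ℕ, f (n + 1)| ≤ Real.exp z / 2 := by
    calc |∑' n : ℕ, f (n + 1)| ≤ ∑' n : ℕ, ‖f (n + 1)‖ := norm_tsum_le_tsum_norm hnorm
      _ ≤ ∑' n : ℕ, Real.exp z * Real.exp (-2 : ℝ) ^ (n + 1) :=
          Summable.tsum_le_tsum hterm hnorm hgeo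
      _ ≤ Real.exp z / 2 := htailsum
  have hsplit : iteratedDeriv k _root_.sigmoid z = f 0 + ∑' n : ℕ, f (n + 1) := by
    rw [sigmoid_formula k z hz0]
    exact Summable.tsum_eq_zero_add hsum
  have hf0 : f 0 = Real.exp z := by
    rw [hf]; norm_num
  rw [hsplit, hf0]
  rw [abs_le] at htail
  constructor <;> linarith [htail.1, htail.2]

end
end

section
/- (Smallness of the first Hermite coefficient of the gated link for even links.) Suppose g_* is an even polynomial, and let a_0, a_1, a_2 be the first three Hermite coefficients of A, which then satisfy a_2 ≠ 0 with d^{C_b}|a_0|, d^{C_b}|a_2| = Θ̃(1) and |a_1| ≤ d^{−C} for a sufficiently large constant C > 0, and let γ = Θ((log d)^{−C_γ}). Then |E_{z~N(0,1)}[ g_*(z) · z · 1{a_0 γ² + a_1 z + a_2 γ He_2(z) > 0} ]| ≤ d^{−C'} for a sufficiently large constant C' > 0 (i.e., b_1 ≲ 1/poly(d)). -/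
open MeasureTheory ProbabilityTheory Real Filter Finset
open scoped ENNReal NNReal

noncomputable section

/- ===== Auxiliary lemmas for the main theorem ===== -/

lemma He2_eq (z : ℝ) : He 2 z = z ^ 2 - 1 := by
  simp [He, Polynomial.hermite_succ, Polynomial.hermite_zero]
  ring

lemma gauss_map_neg : (gaussianReal 0 1).map (fun x => -x) = gaussianReal 0 1 := by
  have h := gaussianReal_map_const_mul (μ := 0) (v := 1) (-1)
  simp only [neg_one_mul] at h
  rw [h]; norm_num

lemma integral_odd (f : ℝ → ℝ) (hf : Integrable f (gaussianReal 0 1))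
    (hodd : ∀ z, f (-z) = - f z) : ∫ z, f z ∂(gaussianReal 0 1) = 0 := by
  have hmap : ∫ z, f z ∂(gaussianReal 0 1) = ∫ z, f (-z) ∂(gaussianReal 0 1) := by
    conv_lhs => rw [← gauss_map_neg]
    rw [integral_map (by fun_prop) (by rw [gauss_map_neg]; exact hf.1)]
  have h2 : ∫ z, f (-z) ∂(gaussianReal 0 1) = - ∫ z, f z ∂(gaussianReal 0 1) := by
    simp only [hodd]
    exact integral_neg f
  linarith [hmap, h2]

lemma abs_pow_le_exp (m : ℕ) (z : ℝ) : |z| ^ m ≤ (m.factorial : ℝ) * Real.exp |z| := by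
  have h1 : |z| ^ m / (m.factorial : ℝ) ≤ Real.exp |z| := by
    calc |z| ^ m / (m.factorial : ℝ)
        ≤ ∑ i ∈ range (m + 1), |z| ^ i / (i.factorial : ℝ) :=
          Finset.single_le_sum (f := fun i => |z| ^ i / (i.factorial : ℝ))
            (fun i _ => by positivity) (Finset.self_mem_range_succ m)
      _ ≤ Real.exp |z| := Real.sum_le_exp_of_nonneg (abs_nonneg z) (m + 1)
  have hm : (0:ℝ) < (m.factorial : ℝ) := by positivity
  calc |z| ^ m = |z| ^ m / (m.factorial : ℝ) * (m.factorial : ℝ) := by field_simp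
    _ ≤ Real.exp |z| * (m.factorial : ℝ) := mul_le_mul_of_nonneg_right h1 hm.le
    _ = _ := by ring

lemma integrable_abs_pow (m : ℕ) :
    Integrable (fun z : ℝ => |z| ^ m) (gaussianReal 0 1) := by
  rw [gaussianReal_of_var_ne_zero _ one_ne_zero,
    integrable_withDensity_iff (measurable_gaussianPDF _ _)
      (Filter.Eventually.of_forall fun x => ENNReal.ofReal_lt_top)]
  have hpdf : ∀ x : ℝ, (gaussianPDF 0 1 x).toReal = gaussianPDFReal 0 1 x := fun x =>
    ENNReal.toReal_ofReal (gaussianPDFReal_nonneg 0 1 x)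
  simp only [hpdf]
  have hb : Integrable (fun z : ℝ => ((m.factorial : ℝ) * Real.exp 1) * Real.exp (-(4:ℝ)⁻¹ * z ^ 2)) volume :=
    (integrable_exp_neg_mul_sq (by norm_num : (0:ℝ) < 4⁻¹)).const_mul _
  refine hb.mono' (((measurable_abs.pow_const m).mul
    (measurable_gaussianPDFReal 0 1)).aestronglyMeasurable) ?_
  filter_upwards with z
  rw [Real.norm_eq_abs]
  have h0 : gaussianPDFReal 0 1 z ≤ Real.exp (-(2:ℝ)⁻¹ * z ^ 2) := by
    unfold gaussianPDFReal
    have h2 : (1:ℝ) ≤ Real.sqrt (2 * π * 1) := by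
      have := Real.sqrt_le_sqrt (show (1:ℝ) ≤ 2 * π * 1 by nlinarith [Real.pi_gt_three])
      rwa [Real.sqrt_one] at this
    calc (Real.sqrt (2 * π * 1))⁻¹ * Real.exp (-(z - 0) ^ 2 / (2 * 1))
        ≤ 1 * Real.exp (-(z - 0) ^ 2 / (2 * 1)) :=
          mul_le_mul_of_nonneg_right (inv_le_one_of_one_le₀ h2) (Real.exp_nonneg _)
      _ = Real.exp (-(2:ℝ)⁻¹ * z ^ 2) := by rw [one_mul]; congr 1; ring
  have hnn : 0 ≤ gaussianPDFReal 0 1 z := gaussianPDFReal_nonneg 0 1 z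
  rw [abs_of_nonneg (by positivity)]
  calc |z| ^ m * gaussianPDFReal 0 1 z
      ≤ ((m.factorial : ℝ) * Real.exp |z|) * Real.exp (-(2:ℝ)⁻¹ * z ^ 2) :=
        mul_le_mul (abs_pow_le_exp m z) h0 hnn (by positivity)
    _ ≤ ((m.factorial : ℝ) * Real.exp 1) * Real.exp (-(4:ℝ)⁻¹ * z ^ 2) := by
        rw [mul_assoc, mul_assoc, ← Real.exp_add, ← Real.exp_add]
        apply mul_le_mul_of_nonneg_left _ (by positivity)
        apply Real.exp_le_exp.2
        nlinarith [abs_nonneg z, sq_abs z, sq_nonneg (|z| - 2)]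

lemma gauss_le_vol (s : Set ℝ) (hs : MeasurableSet s) :
    gaussianReal 0 1 s ≤ volume s := by
  rw [gaussianReal_of_var_ne_zero _ one_ne_zero, withDensity_apply _ hs]
  calc ∫⁻ x in s, gaussianPDF 0 1 x ≤ ∫⁻ _ in s, 1 := by
        apply lintegral_mono
        intro x
        unfold gaussianPDF
        refine ENNReal.ofReal_le_of_le_toReal ?_
        simp only [ENNReal.toReal_one]
        unfold gaussianPDFReal
        have h2 : (1:ℝ) ≤ Real.sqrt (2 * π * 1) := by
          have := Real.sqrt_le_sqrt (show (1:ℝ) ≤ 2 * π * 1 by nlinarith [Real.pi_gt_three])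
          rwa [Real.sqrt_one] at this
        calc (Real.sqrt (2 * π * 1))⁻¹ * Real.exp (-(x - 0) ^ 2 / (2 * 1))
            ≤ 1 * 1 :=
              mul_le_mul (inv_le_one_of_one_le₀ h2)
                (Real.exp_le_one_iff.2 (by nlinarith [sq_nonneg (x - 0)]))
                (Real.exp_nonneg _) zero_le_one
          _ = 1 := one_mul 1
    _ = volume s := by simp

lemma poly_bound (p : Polynomial ℝ) (z : ℝ) :
    |p.eval z| ≤ (∑ i ∈ range (p.natDegree + 1), |p.coeff i|) * max 1 |z| ^ p.natDegree := by
  rw [Polynomial.eval_eq_sum_range]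
  calc |∑ i ∈ range (p.natDegree + 1), p.coeff i * z ^ i|
      ≤ ∑ i ∈ range (p.natDegree + 1), |p.coeff i * z ^ i| := Finset.abs_sum_le_sum_abs _ _
    _ ≤ ∑ i ∈ range (p.natDegree + 1), |p.coeff i| * max 1 |z| ^ p.natDegree := by
        apply Finset.sum_le_sum
        intro i hi
        rw [abs_mul, abs_pow]
        apply mul_le_mul_of_nonneg_left _ (abs_nonneg _)
        calc |z| ^ i ≤ max 1 |z| ^ i :=
              pow_le_pow_left₀ (abs_nonneg z) (le_max_right 1 |z|) i
          _ ≤ max 1 |z| ^ p.natDegree :=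
              pow_le_pow_right₀ (le_max_left 1 |z|) (Nat.lt_succ_iff.1 (Finset.mem_range.1 hi))
    _ = _ := by rw [← Finset.sum_mul]

lemma sqrt_diff_le (r η : ℝ) (hη : 0 ≤ η) :
    Real.sqrt (r + η) - Real.sqrt (r - η) ≤ 2 * Real.sqrt η := by
  have hs2 : Real.sqrt 2 ≤ 2 := by
    have h5 : Real.sqrt 2 ≤ Real.sqrt 4 := Real.sqrt_le_sqrt (by norm_num)
    rwa [show Real.sqrt 4 = 2 by
      rw [show (4:ℝ) = 2 ^ 2 by norm_num, Real.sqrt_sq (by norm_num)]] at h5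
  have h2 : Real.sqrt (2 * η) ≤ 2 * Real.sqrt η := by
    rw [Real.sqrt_mul (by norm_num) η]
    nlinarith [Real.sqrt_nonneg η]
  rcases le_or_gt r η with h | h
  · have h1 : Real.sqrt (r + η) ≤ Real.sqrt (2 * η) := Real.sqrt_le_sqrt (by linarith)
    have h3 : 0 ≤ Real.sqrt (r - η) := Real.sqrt_nonneg _
    linarith
  · have hr : 0 ≤ r - η := by linarith
    have key : Real.sqrt (r + η) ≤ Real.sqrt (r - η) + Real.sqrt (2 * η) := by
      rw [← Real.sqrt_sq (by positivity : (0:ℝ) ≤ Real.sqrt (r - η) + Real.sqrt (2 * η))]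
      apply Real.sqrt_le_sqrt
      have e1 : Real.sqrt (r - η) ^ 2 = r - η := Real.sq_sqrt hr
      have e2 : Real.sqrt (2 * η) ^ 2 = 2 * η := Real.sq_sqrt (by linarith)
      nlinarith [Real.sqrt_nonneg (r - η), Real.sqrt_nonneg (2 * η)]
    linarith

lemma vol_T_le (r η : ℝ) (hη : 0 ≤ η) :
    volume {z : ℝ | |z ^ 2 - r| ≤ η} ≤ ENNReal.ofReal (4 * Real.sqrt η) := by
  have hsub : {z : ℝ | |z ^ 2 - r| ≤ η} ⊆
      Set.Icc (-(Real.sqrt (r + η))) (-(Real.sqrt (r - η))) ∪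
        Set.Icc (Real.sqrt (r - η)) (Real.sqrt (r + η)) := by
    intro z hz
    simp only [Set.mem_setOf_eq, abs_le] at hz
    rcases le_or_gt 0 z with h0 | h0
    · right
      constructor
      · calc Real.sqrt (r - η) ≤ Real.sqrt (z ^ 2) := Real.sqrt_le_sqrt (by linarith)
          _ = z := by rw [Real.sqrt_sq h0]
      · calc z = Real.sqrt (z ^ 2) := by rw [Real.sqrt_sq h0]
          _ ≤ Real.sqrt (r + η) := Real.sqrt_le_sqrt (by linarith)
    · left
      constructor
      · have h1 : -z = Real.sqrt ((-z) ^ 2) := by rw [Real.sqrt_sq (by linarith)]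
        have h2 : Real.sqrt ((-z)^2) ≤ Real.sqrt (r + η) := Real.sqrt_le_sqrt (by nlinarith)
        nlinarith [h1, h2]
      · have h1 : -z = Real.sqrt ((-z) ^ 2) := by rw [Real.sqrt_sq (by linarith)]
        have h2 : Real.sqrt (r - η) ≤ Real.sqrt ((-z)^2) := Real.sqrt_le_sqrt (by nlinarith)
        nlinarith [h1, h2]
  calc volume {z : ℝ | |z ^ 2 - r| ≤ η} ≤ _ := measure_mono hsub
    _ ≤ volume (Set.Icc (-(Real.sqrt (r + η))) (-(Real.sqrt (r - η)))) +
        volume (Set.Icc (Real.sqrt (r - η)) (Real.sqrt (r + η))) := measure_union_le _ _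
    _ ≤ ENNReal.ofReal (4 * Real.sqrt η) := by
        rw [Real.volume_Icc, Real.volume_Icc]
        have hd := sqrt_diff_le r η hη
        have hle : -(Real.sqrt (r - η)) - -(Real.sqrt (r + η)) = Real.sqrt (r + η) - Real.sqrt (r - η) := by ring
        rw [hle]
        calc ENNReal.ofReal (Real.sqrt (r + η) - Real.sqrt (r - η)) +
              ENNReal.ofReal (Real.sqrt (r + η) - Real.sqrt (r - η))
            ≤ ENNReal.ofReal (2 * Real.sqrt η) + ENNReal.ofReal (2 * Real.sqrt η) :=
              add_le_add (ENNReal.ofReal_le_ofReal hd) (ENNReal.ofReal_le_ofReal hd)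
          _ = ENNReal.ofReal (4 * Real.sqrt η) := by
              rw [← ENNReal.ofReal_add (by positivity) (by positivity)]
              congr 1; ring

lemma max_pow_le (z : ℝ) (m : ℕ) : max 1 |z| ^ m ≤ 1 + |z| ^ m := by
  rcases le_total 1 |z| with h | h
  · rw [max_eq_right h]
    nlinarith [pow_nonneg (abs_nonneg z) m]
  · rw [max_eq_left h, one_pow]
    nlinarith [pow_nonneg (abs_nonneg z) m]

lemma integrable_cut (g : Polynomial ℝ) (h : ℝ → ℝ) (hh : Measurable h) :
    Integrable (fun z => g.eval z * z * (if 0 < h z then (1:ℝ) else 0)) (gaussianReal 0 1) := by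
  set B := ∑ i ∈ range (g.natDegree + 1), |g.coeff i| with hB
  have hBnn : 0 ≤ B := Finset.sum_nonneg fun i _ => abs_nonneg _
  have hmeas : Measurable (fun z => g.eval z * z * (if 0 < h z then (1:ℝ) else 0)) := by
    apply ((g.continuous_aeval).measurable.mul measurable_id).mul
    exact Measurable.ite (measurableSet_lt measurable_const hh) measurable_const measurable_const
  refine (((integrable_const (1:ℝ)).add (integrable_abs_pow (g.natDegree + 1))).const_mul B).mono'
    hmeas.aestronglyMeasurable ?_
  filter_upwards with z
  rw [Real.norm_eq_abs]
  have h1 : |g.eval z * z * (if 0 < h z then (1:ℝ) else 0)| ≤ |g.eval z * z| := by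
    rw [abs_mul]
    split_ifs <;> simp <;> positivity
  have h2 : |g.eval z * z| ≤ B * max 1 |z| ^ (g.natDegree + 1) := by
    rw [abs_mul, pow_succ]
    calc |g.eval z| * |z| ≤ (B * max 1 |z| ^ g.natDegree) * max 1 |z| :=
          mul_le_mul (poly_bound g z) (le_max_right 1 |z|) (abs_nonneg z)
            (by positivity)
      _ = B * (max 1 |z| ^ g.natDegree * max 1 |z|) := by ring
  have h3 : max 1 |z| ^ (g.natDegree + 1) ≤ 1 + |z| ^ (g.natDegree + 1) := max_pow_le z _
  calc |g.eval z * z * (if 0 < h z then (1:ℝ) else 0)| ≤ B * max 1 |z| ^ (g.natDegree + 1) := by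
        calc _ ≤ |g.eval z * z| := h1
          _ ≤ _ := h2
    _ ≤ B * (1 + |z| ^ (g.natDegree + 1)) := mul_le_mul_of_nonneg_left h3 hBnn

set_option maxHeartbeats 1000000 in
lemma key_est (g : Polynomial ℝ) (hgev : IsEvenPoly g) (a0 a1 a2 γ : ℝ)
    (ha2 : a2 ≠ 0) (hγ : 0 < γ) (hhalf : |a1| / (|a2| * γ) ≤ 1 / 2) :
    |∫ z, g.eval z * z * (if 0 < a0 * γ ^ 2 + a1 * z + a2 * γ * He 2 z then (1:ℝ) else 0)
        ∂(gaussianReal 0 1)| ≤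
      (∑ i ∈ range (g.natDegree + 1), |g.coeff i|) *
        max 1 (2 + 2 * |1 - a0 * γ / a2|) ^ (g.natDegree + 1) *
        (4 * Real.sqrt (|a1| / (|a2| * γ) * (2 + 2 * |1 - a0 * γ / a2|))) := by
  set μ := gaussianReal 0 1
  set B := ∑ i ∈ range (g.natDegree + 1), |g.coeff i| with hBdef
  set n := g.natDegree with hn
  set ε := |a1| / (|a2| * γ) with hεdef
  set r := 1 - a0 * γ / a2 with hrdef
  set M := 2 + 2 * |r| with hMdef
  set η := ε * M with hηdef
  set α := a2 * γ with hαdef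
  have hBnn : 0 ≤ B := Finset.sum_nonneg fun i _ => abs_nonneg _
  have hαpos : 0 < |α| := by
    rw [hαdef, abs_mul, abs_of_pos hγ]
    exact mul_pos (abs_pos.2 ha2) hγ
  have hαa : |α| = |a2| * γ := by rw [hαdef, abs_mul, abs_of_pos hγ]
  have hεnn : 0 ≤ ε := by positivity
  have hM2 : (2:ℝ) ≤ M := by
    have := abs_nonneg r
    rw [hMdef]; linarith
  have hηnn : 0 ≤ η := by
    rw [hηdef]; exact mul_nonneg hεnn (by linarith)
  set K := B * max 1 M ^ (n + 1) with hKdef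
  have hKnn : 0 ≤ K := by positivity
  set T := {z : ℝ | |z ^ 2 - r| ≤ η} with hTdef
  have hT : MeasurableSet T :=
    measurableSet_le (by fun_prop) measurable_const
  have hHe : ∀ z : ℝ, a0 * γ ^ 2 + a1 * z + a2 * γ * He 2 z = α * (z ^ 2 - r) + a1 * z := by
    intro z
    rw [He2_eq, hαdef, hrdef]
    field_simp
    ring
  set f₁ : ℝ → ℝ := fun z => g.eval z * z * (if 0 < α * (z ^ 2 - r) + a1 * z then (1:ℝ) else 0)
    with hf₁def
  set f₂ : ℝ → ℝ := fun z => g.eval z * z * (if 0 < α * (z ^ 2 - r) then (1:ℝ) else 0) with hf₂def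
  have hint : (∫ z, g.eval z * z *
      (if 0 < a0 * γ ^ 2 + a1 * z + a2 * γ * He 2 z then (1:ℝ) else 0) ∂μ) = ∫ z, f₁ z ∂μ := by
    congr 1
    funext z
    rw [hHe z]
  rw [hint]
  have hif₁ : Integrable f₁ μ :=
    integrable_cut g (fun z => α * (z ^ 2 - r) + a1 * z) (by fun_prop)
  have hif₂ : Integrable f₂ μ :=
    integrable_cut g (fun z => α * (z ^ 2 - r)) (by fun_prop)
  have hodd : ∫ z, f₂ z ∂μ = 0 := by
    apply integral_odd f₂ hif₂
    intro z
    rw [hf₂def]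
    simp only [neg_sq]
    rw [hgev z]
    ring
  have hcore : ∀ z : ℝ, |α * (z ^ 2 - r)| ≤ |a1| * |z| → z ∈ T := by
    intro z hz
    have h1 : |z ^ 2 - r| ≤ ε * |z| := by
      rw [abs_mul] at hz
      rw [hεdef, ← hαa]
      rw [div_mul_eq_mul_div, le_div_iff₀ hαpos]
      calc |z ^ 2 - r| * |α| = |α| * |z ^ 2 - r| := by ring
        _ ≤ |a1| * |z| := hz
    have hzabs : |z| ≤ 1 + z ^ 2 := by nlinarith [sq_abs z, sq_nonneg (|z| - 1), abs_nonneg z]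
    have hz2 : z ^ 2 ≤ 2 * |r| + 1 := by
      have h2 : z ^ 2 - |r| ≤ ε * (1 + z ^ 2) := by
        have := le_abs_self (z ^ 2 - r)
        have := le_abs_self r
        have := neg_abs_le r
        have h3 : ε * |z| ≤ ε * (1 + z ^ 2) := mul_le_mul_of_nonneg_left hzabs hεnn
        nlinarith [abs_nonneg (z ^ 2 - r)]
      have hε2 : ε ≤ 1 / 2 := hhalf
      nlinarith [sq_nonneg z, abs_nonneg r]
    have hzM : |z| ≤ M := by rw [hMdef]; linarith
    have : |z ^ 2 - r| ≤ η := by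
      rw [hηdef]
      calc |z ^ 2 - r| ≤ ε * |z| := h1
        _ ≤ ε * M := mul_le_mul_of_nonneg_left hzM hεnn
    exact this
  have hpt : ∀ z : ℝ, |f₁ z - f₂ z| ≤ T.indicator (fun _ => K) z := by
    intro z
    by_cases hzT : z ∈ T
    · rw [Set.indicator_of_mem hzT]
      have hzM : |z| ≤ M := by
        have hz1 : |z ^ 2 - r| ≤ η := hzT
        have hzabs : |z| ≤ 1 + z ^ 2 := by nlinarith [sq_abs z, sq_nonneg (|z| - 1), abs_nonneg z]
        have hz2 : z ^ 2 ≤ 2 * |r| + 1 := by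
          have h2 : η ≤ (1 / 2) * M := mul_le_mul_of_nonneg_right hhalf (by linarith)
          have h3 := le_abs_self (z ^ 2 - r)
          have h4 := le_abs_self r
          rw [hMdef] at h2
          nlinarith [abs_nonneg r]
        rw [hMdef]; linarith
      have hd : |f₁ z - f₂ z| ≤ |g.eval z * z| := by
        rw [hf₁def, hf₂def]
        simp only
        split_ifs <;> simp [abs_mul] <;> positivity
      have h2 : |g.eval z * z| ≤ B * max 1 |z| ^ (n + 1) := by
        rw [abs_mul, pow_succ]
        calc |g.eval z| * |z| ≤ (B * max 1 |z| ^ n) * max 1 |z| :=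
              mul_le_mul (poly_bound g z) (le_max_right 1 |z|) (abs_nonneg z) (by positivity)
          _ = B * (max 1 |z| ^ n * max 1 |z|) := by ring
      have h3 : max 1 |z| ^ (n + 1) ≤ max 1 M ^ (n + 1) := by
        apply pow_le_pow_left₀ (by positivity)
        exact max_le_max le_rfl hzM
      calc |f₁ z - f₂ z| ≤ B * max 1 |z| ^ (n + 1) := hd.trans h2
        _ ≤ K := by rw [hKdef]; exact mul_le_mul_of_nonneg_left h3 hBnn
    · rw [Set.indicator_of_notMem hzT]
      have heq : f₁ z = f₂ z := by
        rw [hf₁def, hf₂def]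
        simp only
        congr 1
        apply if_congr _ rfl rfl
        constructor
        · intro h
          by_contra hq
          push_neg at hq
          apply hzT
          apply hcore z
          have h5 : |α * (z ^ 2 - r)| = -(α * (z ^ 2 - r)) := abs_of_nonpos hq
          have h6 : a1 * z ≤ |a1| * |z| := by
            rw [← abs_mul]; exact le_abs_self (a1 * z)
          linarith
        · intro h
          by_contra hq
          push_neg at hq
          apply hzT
          apply hcore z
          have h5 : |α * (z ^ 2 - r)| = α * (z ^ 2 - r) := abs_of_pos h
          have h6 : -(a1 * z) ≤ |a1| * |z| := by
            rw [← abs_mul]; exact neg_le_abs (a1 * z)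
          linarith
      rw [heq, sub_self, abs_zero]
  have hμT : (μ T).toReal ≤ 4 * Real.sqrt η := by
    have h1 : μ T ≤ ENNReal.ofReal (4 * Real.sqrt η) :=
      (gauss_le_vol T hT).trans (vol_T_le r η hηnn)
    calc (μ T).toReal ≤ (ENNReal.ofReal (4 * Real.sqrt η)).toReal :=
          ENNReal.toReal_mono ENNReal.ofReal_ne_top h1
      _ = 4 * Real.sqrt η := ENNReal.toReal_ofReal (by positivity)
  calc |∫ z, f₁ z ∂μ| = |∫ z, (f₁ z - f₂ z) ∂μ| := by
        rw [integral_sub hif₁ hif₂, hodd, sub_zero]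
    _ ≤ ∫ z, |f₁ z - f₂ z| ∂μ := by
        simpa [Real.norm_eq_abs] using
          norm_integral_le_integral_norm (μ := μ) (fun z => f₁ z - f₂ z)
    _ ≤ ∫ z, T.indicator (fun _ => K) z ∂μ := by
        apply integral_mono (hif₁.sub hif₂).abs ((integrable_const K).indicator hT) hpt
    _ = (μ T).toReal • K := integral_indicator_const K hT
    _ = K * (μ T).toReal := by rw [smul_eq_mul]; ring
    _ ≤ K * (4 * Real.sqrt η) := mul_le_mul_of_nonneg_left hμT hKnn
    _ = B * max 1 M ^ (n + 1) * (4 * Real.sqrt η) := by rw [hKdef]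

lemma polylog_le (c : ℝ) (hc : 0 < c) (m : ℕ) :
    ∀ᶠ d : ℕ in atTop, Real.log d ^ m ≤ c * d := by
  have h := Real.tendsto_pow_log_div_mul_add_atTop 1 0 m one_ne_zero
  have h2 : ∀ᶠ x : ℝ in atTop, Real.log x ^ m / (1 * x + 0) < c :=
    h.eventually_lt_const hc
  have h3 : ∀ᶠ x : ℝ in atTop, Real.log x ^ m ≤ c * x := by
    filter_upwards [h2, eventually_ge_atTop (1:ℝ)] with x hx hx1
    have hxpos : (0:ℝ) < 1 * x + 0 := by linarith
    rw [div_lt_iff₀ hxpos] at hx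
    nlinarith
  exact (tendsto_natCast_atTop_atTop (R := ℝ)).eventually h3


set_option maxHeartbeats 4000000 in
/-- **Smallness of the first Hermite coefficient of the gated link for even links.** If
`g_*` is an even polynomial and the Hermite coefficients of `A` satisfy `a₂ ≠ 0`,
`d^{C_b}|a₀|, d^{C_b}|a₂| = Θ̃(1)` and `|a₁| ≤ d^{-C}` for sufficiently large `C`, then
`|E_{z~N(0,1)}[g_*(z) z 𝟙{a₀γ² + a₁z + a₂γHe₂(z) > 0}]| ≤ d^{-C'}` for sufficiently
large `C'`. -/
theorem even_link_first_coefficient_small (g : Polynomial ℝ) (hg : gNormalized g)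
    (hgev : IsEvenPoly g) :
    ∃ τ₀ : ℝ, 0 < τ₀ ∧ ∀ τ : ℝ, 0 < τ → τ ≤ τ₀ →
      ∃ Cρ₀ Cb₀ Cγ₀ : ℝ, ∀ Cρ Cb Cγ : ℝ, Cρ₀ ≤ Cρ → Cb₀ ≤ Cb → Cγ₀ ≤ Cγ →
        ∀ ρf γf : ℕ → ℝ, IsTheta ρf (fun d => Real.log d ^ Cρ) →
          IsTheta γf (fun d => Real.log d ^ (-Cγ)) →
          ∀ C' : ℝ, 0 < C' →
            ∃ C₀ : ℝ, 0 < C₀ ∧ ∀ C : ℝ, C₀ ≤ C →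
              -- hypotheses on the coefficients `a₀, a₁, a₂` of `A`
              (∀ᶠ d : ℕ in atTop, aCoef g τ (ρf d) (-(Cb * Real.log d)) d 2 ≠ 0) →
              (∃ c₁ C₁ : ℝ, 0 < c₁ ∧ 0 < C₁ ∧ ∃ k : ℕ, ∀ᶠ d : ℕ in atTop,
                (c₁ * (Real.log d ^ k)⁻¹ ≤
                    (d : ℝ) ^ Cb * |aCoef g τ (ρf d) (-(Cb * Real.log d)) d 0| ∧
                  (d : ℝ) ^ Cb * |aCoef g τ (ρf d) (-(Cb * Real.log d)) d 0| ≤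
                    C₁ * Real.log d ^ k) ∧
                (c₁ * (Real.log d ^ k)⁻¹ ≤
                    (d : ℝ) ^ Cb * |aCoef g τ (ρf d) (-(Cb * Real.log d)) d 2| ∧
                  (d : ℝ) ^ Cb * |aCoef g τ (ρf d) (-(Cb * Real.log d)) d 2| ≤
                    C₁ * Real.log d ^ k)) →
              (∀ᶠ d : ℕ in atTop,
                |aCoef g τ (ρf d) (-(Cb * Real.log d)) d 1| ≤ (d : ℝ) ^ (-C)) →
              ∀ᶠ d : ℕ in atTop,
                |∫ z, g.eval z * z *
                    (if 0 < aCoef g τ (ρf d) (-(Cb * Real.log d)) d 0 * γf d ^ 2 +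
                          aCoef g τ (ρf d) (-(Cb * Real.log d)) d 1 * z +
                          aCoef g τ (ρf d) (-(Cb * Real.log d)) d 2 * γf d * He 2 z
                      then (1 : ℝ) else 0) ∂(gaussianReal 0 1)| ≤ (d : ℝ) ^ (-C') := by
  refine ⟨1, one_pos, fun τ hτ hτ1 => ⟨1, 1, 1, fun Cρ Cb Cγ hCρ hCb hCγ ρf γf hρ hγf C' hC' => ?_⟩⟩
  obtain ⟨cγ, Cγ', hcγ, hCγ', hγb⟩ := hγf
  have hn0 : (0:ℝ) ≤ (g.natDegree : ℝ) := Nat.cast_nonneg _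
  refine ⟨Cb + 2 * C' + 2 * (g.natDegree : ℝ) + 6, by linarith only [hn0, hCb, hC'], ?_⟩
  intro C hC h2ne hΘ ha1
  obtain ⟨c₁, C₁, hc₁, hC₁, k, hbd⟩ := hΘ
  set n := g.natDegree with hndef
  set B := ∑ i ∈ range (n + 1), |g.coeff i| with hBdef
  have hBnn : 0 ≤ B := Finset.sum_nonneg fun i _ => abs_nonneg _
  have E3 : ∀ᶠ d : ℕ in atTop, (3:ℝ) ≤ (d:ℝ) :=
    (tendsto_natCast_atTop_atTop (R := ℝ)).eventually_ge_atTop 3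
  have EB : ∀ᶠ d : ℕ in atTop, 4 * B + 1 ≤ (d:ℝ) :=
    (tendsto_natCast_atTop_atTop (R := ℝ)).eventually_ge_atTop (4 * B + 1)
  have Ep1 : ∀ᶠ d : ℕ in atTop, Real.log d ^ (k + ⌈Cγ⌉₊) ≤ (c₁ * cγ) * d :=
    polylog_le _ (by positivity) _
  have Ep2 : ∀ᶠ d : ℕ in atTop,
      Real.log d ^ (2 * k) ≤ (c₁ / (4 * C₁ * Cγ' + 4)) * d :=
    polylog_le _ (by positivity) _
  filter_upwards [h2ne, hbd, ha1, hγb, E3, EB, Ep1, Ep2, eventually_ge_atTop 8]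
    with d hd2 hbdd ha1d hγd hd3 hdB hp1 hp2 hd8'
  have hd8 : (8:ℝ) ≤ (d:ℝ) := by exact_mod_cast hd8'
  set L := Real.log d with hLdef
  set D := (d:ℝ) ^ Cb with hDdef
  set P := L ^ k with hPdef
  set a0v := aCoef g τ (ρf d) (-(Cb * L)) d 0 with ha0def
  set a1v := aCoef g τ (ρf d) (-(Cb * L)) d 1 with ha1def
  set a2v := aCoef g τ (ρf d) (-(Cb * L)) d 2 with ha2def
  set γv := γf d with hγvdef
  clear_value L D P a0v a1v a2v γv
  obtain ⟨⟨hl0, hu0⟩, hl2, hu2⟩ := hbdd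
  have hdpos : (0:ℝ) < (d:ℝ) := by linarith only [hd3]
  have hd1 : (1:ℝ) ≤ (d:ℝ) := by linarith only [hd3]
  have hL1 : (1:ℝ) ≤ L := by
    rw [hLdef]
    have he3 : Real.exp 1 ≤ 3 := by
      have := Real.exp_one_lt_d9
      linarith only [this]
    calc (1:ℝ) = Real.log (Real.exp 1) := (Real.log_exp 1).symm
      _ ≤ Real.log d := Real.log_le_log (Real.exp_pos 1) (he3.trans hd3)
  have hLpos : (0:ℝ) < L := by linarith only [hL1]
  have hPpos : (0:ℝ) < P := by rw [hPdef]; exact pow_pos hLpos k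
  have hDpos : (0:ℝ) < D := by rw [hDdef]; exact Real.rpow_pos_of_pos hdpos Cb
  have hγpos : (0:ℝ) < γv :=
    lt_of_lt_of_le (by positivity : (0:ℝ) < cγ * L ^ (-Cγ)) hγd.1
  have ha2pos : (0:ℝ) < |a2v| := abs_pos.2 hd2
  have hγle : γv ≤ Cγ' := by
    have h1 : L ^ (-Cγ) ≤ 1 := Real.rpow_le_one_of_one_le_of_nonpos hL1 (by linarith only [hCγ])
    calc γv ≤ Cγ' * L ^ (-Cγ) := hγd.2
      _ ≤ Cγ' * 1 := mul_le_mul_of_nonneg_left h1 hCγ'.le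
      _ = Cγ' := mul_one _
  have hl2' : c₁ ≤ |a2v| * (P * D) := by
    have h := mul_le_mul_of_nonneg_right hl2 hPpos.le
    have e : c₁ * P⁻¹ * P = c₁ := by field_simp
    linarith only [h, e]
  -- bound on ε
  have hγL : cγ ≤ γv * L ^ Cγ := by
    have h := mul_le_mul_of_nonneg_right hγd.1 (Real.rpow_pos_of_pos hLpos Cγ).le
    have hLC : L ^ (-Cγ) * L ^ Cγ = 1 := by
      rw [← Real.rpow_add hLpos]; simp
    calc cγ = cγ * (L ^ (-Cγ) * L ^ Cγ) := by rw [hLC, mul_one]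
      _ = cγ * L ^ (-Cγ) * L ^ Cγ := by ring
      _ ≤ γv * L ^ Cγ := h
  have hPQd : P * L ^ Cγ ≤ c₁ * cγ * d := by
    have h1 : L ^ Cγ ≤ L ^ (⌈Cγ⌉₊ : ℕ) := by
      have h2 : L ^ Cγ ≤ L ^ ((⌈Cγ⌉₊ : ℕ) : ℝ) :=
        Real.rpow_le_rpow_of_exponent_le hL1 (Nat.le_ceil Cγ)
      rwa [Real.rpow_natCast] at h2
    calc P * L ^ Cγ ≤ P * L ^ (⌈Cγ⌉₊ : ℕ) := mul_le_mul_of_nonneg_left h1 hPpos.le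
      _ = L ^ (k + ⌈Cγ⌉₊) := by rw [hPdef, ← pow_add]
      _ ≤ c₁ * cγ * d := hp1
  have F5 : (d:ℝ) ^ (-C) * D * (d:ℝ) = (d:ℝ) ^ (Cb - C + 1) := by
    rw [hDdef, show Cb - C + 1 = -C + Cb + 1 by ring, Real.rpow_add hdpos,
      Real.rpow_add hdpos, Real.rpow_one]
  have hεb : |a1v| / (|a2v| * γv) ≤ (d:ℝ) ^ (Cb - C + 1) := by
    have hden : (0:ℝ) < |a2v| * γv := mul_pos ha2pos hγpos
    rw [div_le_iff₀ hden]
    have c23 : c₁ * cγ ≤ (|a2v| * γv) * (P * D * L ^ Cγ) := by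
      linarith only [mul_le_mul hl2' hγL hcγ.le (by positivity : (0:ℝ) ≤ |a2v| * (P * D))]
    have c4 : P * D * L ^ Cγ ≤ (c₁ * cγ) * ((d:ℝ) * D) := by
      linarith only [mul_le_mul_of_nonneg_right hPQd hDpos.le]
    have c5 : c₁ * cγ ≤ (|a2v| * γv) * ((c₁ * cγ) * ((d:ℝ) * D)) :=
      c23.trans (mul_le_mul_of_nonneg_left c4 hden.le)
    have c6 : (1:ℝ) ≤ (|a2v| * γv) * ((d:ℝ) * D) := by
      refine le_of_mul_le_mul_left ?_ (mul_pos hc₁ hcγ)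
      calc (c₁ * cγ) * 1 = c₁ * cγ := mul_one _
        _ ≤ (|a2v| * γv) * ((c₁ * cγ) * ((d:ℝ) * D)) := c5
        _ = (c₁ * cγ) * ((|a2v| * γv) * ((d:ℝ) * D)) := by ring
    calc |a1v| ≤ (d:ℝ) ^ (-C) := ha1d
      _ = (d:ℝ) ^ (-C) * 1 := (mul_one _).symm
      _ ≤ (d:ℝ) ^ (-C) * ((|a2v| * γv) * ((d:ℝ) * D)) :=
          mul_le_mul_of_nonneg_left c6 (Real.rpow_nonneg hdpos.le _)
      _ = ((d:ℝ) ^ (-C) * D * (d:ℝ)) * (|a2v| * γv) := by ring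
      _ = (d:ℝ) ^ (Cb - C + 1) * (|a2v| * γv) := by rw [F5]
  have hεhalf : |a1v| / (|a2v| * γv) ≤ 1 / 2 := by
    calc |a1v| / (|a2v| * γv) ≤ (d:ℝ) ^ (Cb - C + 1) := hεb
      _ ≤ (d:ℝ) ^ (-1 : ℝ) :=
          Real.rpow_le_rpow_of_exponent_le hd1 (by linarith only [hC, hC', hn0, hCb])
      _ = ((d:ℝ))⁻¹ := Real.rpow_neg_one _
      _ ≤ 1 / 2 := by
          rw [show (1:ℝ) / 2 = (2:ℝ)⁻¹ by norm_num]
          exact inv_anti₀ (by norm_num) (by linarith only [hd3])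
  -- bound on M
  have hfrac : |a0v| * γv ≤ (d - 4) / 2 * |a2v| := by
    refine le_of_mul_le_mul_left ?_ hc₁
    have hP2 : L ^ (2 * k) = P ^ 2 := by rw [hPdef, ← pow_mul, mul_comm]
    have hp2' : P ^ 2 ≤ (c₁ / (4 * C₁ * Cγ' + 4)) * d := by rw [← hP2]; exact hp2
    have s1 : c₁ * (|a0v| * γv) ≤ (|a2v| * (P * D)) * (|a0v| * γv) :=
      mul_le_mul_of_nonneg_right hl2' (by positivity)
    have s2 : (D * |a0v|) * γv ≤ (C₁ * P) * Cγ' :=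
      mul_le_mul hu0 hγle hγpos.le (by positivity)
    have s3 : (|a2v| * P) * ((D * |a0v|) * γv) ≤ (|a2v| * P) * ((C₁ * P) * Cγ') :=
      mul_le_mul_of_nonneg_left s2 (by positivity)
    have s4 : c₁ * (|a0v| * γv) ≤ C₁ * Cγ' * P ^ 2 * |a2v| := by linarith only [s1, s3]
    have s5 : C₁ * Cγ' * P ^ 2 * |a2v| ≤
        C₁ * Cγ' * ((c₁ / (4 * C₁ * Cγ' + 4)) * d) * |a2v| := by
      have := mul_le_mul_of_nonneg_right
        (mul_le_mul_of_nonneg_left hp2' (by positivity : (0:ℝ) ≤ C₁ * Cγ')) (abs_nonneg a2v)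
      linarith only [this]
    have hq : C₁ * Cγ' * (c₁ / (4 * C₁ * Cγ' + 4)) ≤ c₁ / 4 := by
      rw [← mul_div_assoc, div_le_div_iff₀ (by positivity) (by norm_num)]
      linarith only [hc₁]
    have s6 : C₁ * Cγ' * ((c₁ / (4 * C₁ * Cγ' + 4)) * d) * |a2v| ≤
        c₁ / 4 * ((d:ℝ) * |a2v|) := by
      have := mul_le_mul_of_nonneg_right hq
        (mul_nonneg hdpos.le (abs_nonneg a2v))
      linarith only [this]
    have s7 : c₁ / 4 * ((d:ℝ) * |a2v|) ≤ c₁ * (((d:ℝ) - 4) / 2 * |a2v|) := by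
      have h8 : (0:ℝ) ≤ c₁ * |a2v| * ((d:ℝ) - 8) :=
        mul_nonneg (mul_nonneg hc₁.le (abs_nonneg a2v)) (by linarith only [hd8])
      linarith only [h8]
    calc c₁ * (|a0v| * γv) ≤ c₁ * ((d - 4) / 2 * |a2v|) := by linarith only [s4, s5, s6, s7]
      _ = c₁ * ((↑d - 4) / 2 * |a2v|) := rfl
  have hM : 2 + 2 * |1 - a0v * γv / a2v| ≤ (d:ℝ) := by
    have habsx : |a0v * γv / a2v| = |a0v| * γv / |a2v| := by
      rw [abs_div, abs_mul, abs_of_pos hγpos]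
    have habs0 : |1 - a0v * γv / a2v| ≤ 1 + |a0v| * γv / |a2v| := by
      rw [sub_eq_add_neg]
      calc |1 + -(a0v * γv / a2v)| ≤ |(1:ℝ)| + |-(a0v * γv / a2v)| := abs_add_le _ _
        _ = 1 + |a0v| * γv / |a2v| := by rw [abs_neg, abs_one, habsx]
    have hfrac' : |a0v| * γv / |a2v| ≤ (d - 4) / 2 := by
      rw [div_le_iff₀ ha2pos]
      linarith only [hfrac]
    linarith only [habs0, hfrac']
  -- apply the key estimate
  have hkey := key_est g hgev a0v a1v a2v γv hd2 hγpos hεhalf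
  have hmaxM : max 1 (2 + 2 * |1 - a0v * γv / a2v|) ≤ (d:ℝ) := max_le hd1 hM
  have hεM : |a1v| / (|a2v| * γv) * (2 + 2 * |1 - a0v * γv / a2v|) ≤
      (d:ℝ) ^ (Cb - C + 1) * (d:ℝ) := by
    apply mul_le_mul hεb (le_trans (le_max_right 1 _) hmaxM) (by positivity)
      (Real.rpow_nonneg hdpos.le _)
  have hsqeq : Real.sqrt ((d:ℝ) ^ (Cb - C + 1) * (d:ℝ)) = (d:ℝ) ^ ((Cb - C + 2) / 2) := by
    rw [show (d:ℝ) ^ (Cb - C + 1) * (d:ℝ) = (d:ℝ) ^ (Cb - C + 2) by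
        rw [show Cb - C + 2 = (Cb - C + 1) + 1 by ring, Real.rpow_add hdpos (Cb - C + 1) 1,
          Real.rpow_one],
      Real.sqrt_eq_rpow, ← Real.rpow_mul hdpos.le]
    congr 1
    ring
  have hsqrt : Real.sqrt (|a1v| / (|a2v| * γv) * (2 + 2 * |1 - a0v * γv / a2v|)) ≤
      (d:ℝ) ^ ((Cb - C + 2) / 2) := by
    rw [← hsqeq]
    exact Real.sqrt_le_sqrt hεM
  calc |∫ z, g.eval z * z *
        (if 0 < a0v * γv ^ 2 + a1v * z + a2v * γv * He 2 z then (1:ℝ) else 0)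
        ∂(gaussianReal 0 1)|
      ≤ B * max 1 (2 + 2 * |1 - a0v * γv / a2v|) ^ (n + 1) *
          (4 * Real.sqrt (|a1v| / (|a2v| * γv) * (2 + 2 * |1 - a0v * γv / a2v|))) := hkey
    _ ≤ B * (d:ℝ) ^ (n + 1) * (4 * (d:ℝ) ^ ((Cb - C + 2) / 2)) := by
        apply mul_le_mul
        · apply mul_le_mul_of_nonneg_left _ hBnn
          exact pow_le_pow_left₀ (by positivity) hmaxM _
        · exact mul_le_mul_of_nonneg_left hsqrt (by norm_num)
        · positivity
        · positivity
    _ = (4 * B) * ((d:ℝ) ^ (n + 1) * (d:ℝ) ^ ((Cb - C + 2) / 2)) := by ring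
    _ ≤ (d:ℝ) * ((d:ℝ) ^ (n + 1) * (d:ℝ) ^ ((Cb - C + 2) / 2)) := by
        apply mul_le_mul_of_nonneg_right (by linarith only [hdB]) (by positivity)
    _ = (d:ℝ) ^ ((1:ℝ) + ((n + 1 : ℕ) : ℝ) + (Cb - C + 2) / 2) := by
        rw [Real.rpow_add hdpos, Real.rpow_add hdpos, Real.rpow_one, Real.rpow_natCast]
        ring
    _ ≤ (d:ℝ) ^ (-C') := by
        apply Real.rpow_le_rpow_of_exponent_le hd1
        push_cast
        linarith only [hC, hC', hn0, hCb]

end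
end
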